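/- If P is a pseudoadditive (abelian group)-valued k-functor, then P is a sheaf for the fpqc topology. -/

import Mathlib

universe u

open TensorProduct

/-- An (abelian group)-valued `k`-functor: a functor from commutative `k`-algebras
(in universe `u`) to abelian groups. -/
structure AbFunctor (k : Type u) [Field k] : Type (u + 1) where
  obj : ∀ (B : Type u) [CommRing B] [Algebra k B], Type u
  [grp : ∀ (B : Type u) [CommRing B] [Algebra k B], AddCommGroup (obj B)]
  map : ∀ {B C : Type u} [CommRing B] [Algebra k B] [CommRing C] [Algebra k C],
    (B →ₐ[k] C) → (obj B →+ obj C)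
  map_id : ∀ (B : Type u) [CommRing B] [Algebra k B],
    map (AlgHom.id k B) = AddMonoidHom.id (obj B)
  map_comp : ∀ {B C D : Type u} [CommRing B] [Algebra k B] [CommRing C] [Algebra k C]
    [CommRing D] [Algebra k D] (f : B →ₐ[k] C) (g : C →ₐ[k] D),
    map (g.comp f) = (map g).comp (map f)

attribute [instance] AbFunctor.grp

variable (k : Type u) [Field k]

/-- A morphism of (abelian group)-valued `k`-functors. -/
structure AbHom (F G : AbFunctor k) where
  app : ∀ (B : Type u) [CommRing B] [Algebra k B], F.obj B →+ G.obj B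
  naturality : ∀ {B C : Type u} [CommRing B] [Algebra k B] [CommRing C] [Algebra k C]
    (f : B →ₐ[k] C) (x : F.obj B), G.map f (app B x) = app C (F.map f x)

/-- A natural transformation of the underlying set-valued functors
(not required to be additive). -/
structure SetHom (F G : AbFunctor k) where
  app : ∀ (B : Type u) [CommRing B] [Algebra k B], F.obj B → G.obj B
  naturality : ∀ {B C : Type u} [CommRing B] [Algebra k B] [CommRing C] [Algebra k C]
    (f : B →ₐ[k] C) (x : F.obj B), G.map f (app B x) = app C (F.map f x)

/-- An isomorphism of (abelian group)-valued `k`-functors. -/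
structure AbIso (F G : AbFunctor k) where
  hom : AbHom k F G
  inv : AbHom k G F
  hom_inv : ∀ (B : Type u) [CommRing B] [Algebra k B] (x : F.obj B),
    inv.app B (hom.app B x) = x
  inv_hom : ∀ (B : Type u) [CommRing B] [Algebra k B] (x : G.obj B),
    hom.app B (inv.app B x) = x
/-- `𝔾_a^ι`, the direct sum of `ι` copies of the additive group functor,
`B ↦ ⊕_{i : ι} (B, +)`. -/
noncomputable def Ga (ι : Type u) : AbFunctor k where
  obj B _ _ := ι →₀ B
  grp B _ _ := inferInstance
  map f := Finsupp.mapRange.addMonoidHom f.toRingHom.toAddMonoidHom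
  map_id B _ _ := by
    ext x i
    simp [Finsupp.mapRange.addMonoidHom]
  map_comp f g := by
    ext x i
    simp only [AddMonoidHom.coe_comp, Function.comp_apply,
      Finsupp.mapRange.addMonoidHom_apply, Finsupp.mapRange_single,
      Finsupp.singleAddHom_apply]
    rfl
/-- A functor is strictly additive if it is isomorphic to `𝔾_a^α` for some
`α ∈ {0, 1, …, ∞}`. -/
def IsStrictlyAdditive (F : AbFunctor k) : Prop :=
  (∃ n : ℕ, Nonempty (AbIso k F (Ga k (ULift.{u} (Fin n))))) ∨
    Nonempty (AbIso k F (Ga k (ULift.{u} ℕ)))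
/-- `0 → F' → F → F'' → 0` is a short exact sequence of (abelian group)-valued
`k`-functors (exactness is objectwise). -/
structure IsShortExact {F' F F'' : AbFunctor k} (i : AbHom k F' F)
    (p : AbHom k F F'') : Prop where
  inj : ∀ (B : Type u) [CommRing B] [Algebra k B], Function.Injective (i.app B)
  surj : ∀ (B : Type u) [CommRing B] [Algebra k B], Function.Surjective (p.app B)
  exact : ∀ (B : Type u) [CommRing B] [Algebra k B] (x : F.obj B),
    p.app B x = 0 ↔ x ∈ Set.range (i.app B)
/-- A functor is additive if it admits a finite filtration with strictly additive
successive quotients; equivalently (and as formalized here), the class of additive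
functors is the smallest class containing the strictly additive functors and closed
under extensions with strictly additive quotients. -/
inductive IsAdditive : AbFunctor k → Prop
  | of_strict (F : AbFunctor k) : IsStrictlyAdditive k F → IsAdditive F
  | of_ext {F' F F'' : AbFunctor k} (i : AbHom k F' F) (p : AbHom k F F'') :
      IsShortExact k i p → IsAdditive F' → IsStrictlyAdditive k F'' → IsAdditive F
/-- A functor `P` is pseudoadditive if for some `n` there is an exact sequence
`0 → U_1 → ⋯ → U_n → P → 0` with all `U_i` additive; formalized by splicing:
either `P` is additive, or `P` is a quotient of an additive functor by a
pseudoadditive subfunctor. -/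
inductive IsPseudoadditive : AbFunctor k → Prop
  | of_additive (P : AbFunctor k) : IsAdditive k P → IsPseudoadditive P
  | of_ext {K U P : AbFunctor k} (i : AbHom k K U) (p : AbHom k U P) :
      IsShortExact k i p → IsPseudoadditive K → IsAdditive k U → IsPseudoadditive P
section TensorIncl

variable {B C : Type u} [CommRing B] [Algebra k B] [CommRing C] [Algebra k C]
  [Algebra B C] [IsScalarTower k B C]

/-- `c ↦ c ⊗ 1 : C → C ⊗_B C`, as a `k`-algebra homomorphism. -/
noncomputable def tensorIncl₁ : C →ₐ[k] C ⊗[B] C :=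
  Algebra.TensorProduct.includeLeft

/-- `c ↦ 1 ⊗ c : C → C ⊗_B C`, as a `k`-algebra homomorphism. -/
noncomputable def tensorIncl₂ : C →ₐ[k] C ⊗[B] C :=
  (Algebra.TensorProduct.includeRight (R := B) (A := C) (B := C)).restrictScalars k

end TensorIncl

/-- A functor is a sheaf for the fpqc topology if for every faithfully flat
homomorphism `B → C` of commutative `k`-algebras, `F(B)` is exactly the equalizer of
the two maps `F(C) ⇉ F(C ⊗_B C)` induced by `c ↦ c ⊗ 1` and `c ↦ 1 ⊗ c`. -/
def IsFpqcSheaf (F : AbFunctor k) : Prop :=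
  ∀ (B C : Type u) [CommRing B] [Algebra k B] [CommRing C] [Algebra k C]
    [Algebra B C] [IsScalarTower k B C], Module.FaithfullyFlat B C →
    Function.Injective (F.map (IsScalarTower.toAlgHom k B C)) ∧
    Set.range (F.map (IsScalarTower.toAlgHom k B C)) =
      { x : F.obj C |
        F.map (tensorIncl₁ k (B := B) (C := C)) x
          = F.map (tensorIncl₂ k (B := B) (C := C)) x }

section
variable (k B C : Type u) [Field k] [CommRing B] [Algebra k B] [CommRing C] [Algebra k C]
  [Algebra B C] [IsScalarTower k B C]

structure APack : Type (u+1) where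
  X : Type u
  [cr : CommRing X]
  [ak : Algebra k X]
  [ab : Algebra B X]
  [tw : IsScalarTower k B X]

attribute [instance] APack.cr APack.ak APack.ab APack.tw

noncomputable abbrev apack (n : ℕ) : APack k B :=
  Nat.rec ⟨C⟩ (fun _ P => ⟨C ⊗[B] P.X⟩) n

noncomputable abbrev TT (n : ℕ) : Type u := (apack k B C n).X
noncomputable instance (n : ℕ) : CommRing (TT k B C n) := (apack k B C n).cr
noncomputable instance (n : ℕ) : Algebra k (TT k B C n) := (apack k B C n).ak
noncomputable instance (n : ℕ) : Algebra B (TT k B C n) := (apack k B C n).ab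
instance (n : ℕ) : IsScalarTower k B (TT k B C n) := (apack k B C n).tw

example : TT k B C 1 = (C ⊗[B] C) := rfl

noncomputable def ad : (n : ℕ) → ℕ → (TT k B C n →ₐ[B] TT k B C (n+1))
  | _, 0 => Algebra.TensorProduct.includeRight
  | 0, (_+1) => Algebra.TensorProduct.includeLeft (S := B)
  | (n+1), (i+1) => Algebra.TensorProduct.map (AlgHom.id B C) (ad n i)
end
section
variable (k B C : Type u) [Field k] [CommRing B] [Algebra k B] [CommRing C] [Algebra k C]
  [Algebra B C] [IsScalarTower k B C]

lemma ad_comp (n i j : ℕ) (hij : i ≤ j) (hj : j ≤ n + 1) :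
    (ad k B C (n+1) (j+1)).comp (ad k B C n i) = (ad k B C (n+1) i).comp (ad k B C n j) := by
  induction n generalizing i j with
  | zero =>
      interval_cases j <;> interval_cases i <;>
        refine AlgHom.ext fun c => ?_ <;>
        rfl
  | succ m ih =>
      match i, j with
      | 0, j =>
          show (Algebra.TensorProduct.map (AlgHom.id B C) (ad k B C (m+1) j)).comp
              Algebra.TensorProduct.includeRight = _
          refine AlgHom.ext fun x => ?_
          rfl
      | (i+1), (j+1) =>
          show (Algebra.TensorProduct.map (AlgHom.id B C) (ad k B C (m+1) (j+1))).comp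
                (Algebra.TensorProduct.map (AlgHom.id B C) (ad k B C m i)) =
              (Algebra.TensorProduct.map (AlgHom.id B C) (ad k B C (m+1) i)).comp
                (Algebra.TensorProduct.map (AlgHom.id B C) (ad k B C m j))
          rw [← Algebra.TensorProduct.map_comp, ← Algebra.TensorProduct.map_comp,
            ih i j (by omega) (by omega)]
end
lemma alt_sum_cancel {M : Type*} [AddCommGroup M] (n : ℕ) (g : ℕ → ℕ → M)
    (hg : ∀ i j, i ≤ j → j ≤ n + 1 → g (j+1) i = g i j) :
    ∑ j ∈ Finset.range (n+3), ∑ i ∈ Finset.range (n+2), ((-1:ℤ)^(i+j)) • g j i = 0 := by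
  rw [← Finset.sum_product']
  refine Finset.sum_involution
    (fun p _ => if p.2 < p.1 then (p.2, p.1 - 1) else (p.2 + 1, p.1)) ?_ ?_ ?_ ?_
  · rintro ⟨j, i⟩ hp
    simp only [Finset.mem_product, Finset.mem_range] at hp
    by_cases h : i < j
    · simp only [h, if_pos]
      obtain ⟨j, rfl⟩ : ∃ j', j = j' + 1 := ⟨j - 1, by omega⟩
      simp only [Nat.add_sub_cancel]
      rw [hg i j (by omega) (by omega), show i+(j+1) = (j+i)+1 by omega, pow_succ]
      simp [neg_smul]
    · simp only [h, if_neg, not_false_iff]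
      rw [hg j i (by omega) (by omega), show j+(i+1) = (i+j)+1 by omega, pow_succ]
      simp [neg_smul]
  · rintro ⟨j, i⟩ hp hne
    by_cases h : i < j <;> simp [h, Prod.ext_iff] <;> omega
  · rintro ⟨j, i⟩ hp
    simp only [Finset.mem_product, Finset.mem_range] at hp ⊢
    by_cases h : i < j <;> simp [h] <;> omega
  · rintro ⟨j, i⟩ hp
    by_cases h : i < j <;> simp [h]
    · have : ¬ (j - 1 < i) := by omega
      simp [this]; omega

section
variable (k B C : Type u) [Field k] [CommRing B] [Algebra k B] [CommRing C] [Algebra k C]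
  [Algebra B C] [IsScalarTower k B C]

noncomputable def DL (n : ℕ) : TT k B C n →ₗ[B] TT k B C (n+1) :=
  ∑ i ∈ Finset.range (n+2), ((-1:ℤ)^i) • (ad k B C n i).toLinearMap

lemma DL_apply (n : ℕ) (x : TT k B C n) :
    DL k B C n x = ∑ i ∈ Finset.range (n+2), ((-1:ℤ)^i) • ad k B C n i x := by
  simp [DL, LinearMap.sum_apply]

lemma DL_comp_DL (n : ℕ) (x : TT k B C n) : DL k B C (n+1) (DL k B C n x) = 0 := by
  rw [DL_apply k B C n x, map_sum]
  have : ∀ i ∈ Finset.range (n+2),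
      DL k B C (n+1) (((-1:ℤ)^i) • ad k B C n i x)
        = ∑ j ∈ Finset.range (n+3), ((-1:ℤ)^(i+j)) • ad k B C (n+1) j (ad k B C n i x) := by
    intro i _
    rw [map_zsmul, DL_apply, Finset.smul_sum]
    refine Finset.sum_congr rfl fun j _ => ?_
    rw [smul_smul, ← pow_add]
  rw [Finset.sum_congr rfl this, Finset.sum_comm]
  exact alt_sum_cancel n (fun j i => ad k B C (n+1) j (ad k B C n i x))
    (fun i j hij hj => by
      show ad k B C (n+1) (j+1) (ad k B C n i x) = ad k B C (n+1) i (ad k B C n j x)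
      rw [← AlgHom.comp_apply, ad_comp k B C n i j hij hj, AlgHom.comp_apply])


noncomputable def botL (B C : Type u) [CommRing B] [CommRing C] [Algebra B C] : B →ₗ[B] C := Algebra.linearMap B C

noncomputable def hmt0 (B C : Type u) [CommRing B] [CommRing C] [Algebra B C] :
    C ⊗[B] C →ₗ[B] B ⊗[B] C :=
  (TensorProduct.mk B B C 1) ∘ₗ (LinearMap.mul' B C)

noncomputable def hmt (n : ℕ) : TT k B C (n+1) ⊗[B] C →ₗ[B] TT k B C n ⊗[B] C :=
  (LinearMap.lTensor (TT k B C n) (LinearMap.mul' B C))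
    ∘ₗ (TensorProduct.assoc B (TT k B C n) C C).toLinearMap
    ∘ₗ (LinearMap.rTensor C (TensorProduct.comm B C (TT k B C n)).toLinearMap)

lemma hmt_tmul (n : ℕ) (c₀ : C) (x : TT k B C n) (c : C) :
    hmt k B C n (((c₀ ⊗ₜ[B] x : C ⊗[B] TT k B C n) : TT k B C (n+1)) ⊗ₜ[B] c)
      = x ⊗ₜ[B] (c₀ * c) := by
  rfl

noncomputable def rbot : B ⊗[B] C →ₗ[B] TT k B C 0 ⊗[B] C := (botL B C).rTensor C

lemma hmt0_bottom (y : B ⊗[B] C) : hmt0 B C ((botL B C).rTensor C y) = y := by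
  induction y with
  | zero => simp
  | add a b ha hb => simp only [map_add, ha, hb]
  | tmul b c =>
      show (1:B) ⊗ₜ[B] ((algebraMap B C b) * c) = b ⊗ₜ[B] c
      rw [← Algebra.smul_def, TensorProduct.tmul_smul, TensorProduct.smul_tmul',
        smul_eq_mul, mul_one]

lemma DL_bottom (b : B) : DL k B C 0 (algebraMap B C b) = 0 := by
  rw [DL_apply]
  simp only [Finset.sum_range_succ, Finset.sum_range_zero, zero_add, pow_zero, pow_one, one_smul,
    neg_smul, one_smul]
  have h0 := (ad k B C 0 0).commutes b
  have h1 := (ad k B C 0 1).commutes b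
  show ad k B C 0 0 (algebraMap B (TT k B C 0) b) + -(ad k B C 0 1 (algebraMap B (TT k B C 0) b)) = 0
  rw [h0, h1, add_neg_cancel]

lemma homotopy0_pure (c₀ c : C) :
    hmt k B C 0 ((DL k B C 0).rTensor C ((c₀ ⊗ₜ[B] c : C ⊗[B] C) : TT k B C 0 ⊗[B] C))
      + rbot k B C (hmt0 B C ((c₀ ⊗ₜ[B] c : C ⊗[B] C) : TT k B C 0 ⊗[B] C))
      = ((c₀ ⊗ₜ[B] c : C ⊗[B] C) : TT k B C 0 ⊗[B] C) := by
  have h1 : (DL k B C 0).rTensor C ((c₀ ⊗ₜ[B] c : C ⊗[B] C) : TT k B C 0 ⊗[B] C)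
      = (DL k B C 0 c₀) ⊗ₜ[B] c := rfl
  have h2 : DL k B C 0 c₀ = ad k B C 0 0 c₀ - ad k B C 0 1 c₀ := by
    rw [DL_apply]
    simp [Finset.sum_range_succ, sub_eq_add_neg]
  rw [h1, h2, TensorProduct.sub_tmul, map_sub]
  have h3 : hmt k B C 0 ((ad k B C 0 0 c₀) ⊗ₜ[B] c)
      = ((c₀ ⊗ₜ[B] (1 * c) : C ⊗[B] C) : TT k B C 0 ⊗[B] C) := rfl
  have h4 : hmt k B C 0 ((ad k B C 0 1 c₀) ⊗ₜ[B] c)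
      = (((1:C) ⊗ₜ[B] (c₀ * c) : C ⊗[B] C) : TT k B C 0 ⊗[B] C) := rfl
  have h5 : rbot k B C (hmt0 B C ((c₀ ⊗ₜ[B] c : C ⊗[B] C) : TT k B C 0 ⊗[B] C))
      = (((algebraMap B C 1) ⊗ₜ[B] (c₀ * c) : C ⊗[B] C) : TT k B C 0 ⊗[B] C) := rfl
  rw [h3, h4, h5, one_mul, map_one]
  exact sub_add_cancel _ _

lemma homotopy0 (y : TT k B C 0 ⊗[B] C) :
    hmt k B C 0 ((DL k B C 0).rTensor C y) + rbot k B C (hmt0 B C y) = y := by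
  induction y with
  | zero => simp
  | add a b ha hb =>
      simp only [map_add]
      rw [add_add_add_comm, ha, hb]
  | tmul c₀ c => exact homotopy0_pure k B C c₀ c

lemma homotopyS_pure (n : ℕ) (c₀ : C) (x : TT k B C n) (c : C) :
    hmt k B C (n+1) ((DL k B C (n+1)).rTensor C
        (((c₀ ⊗ₜ[B] x : C ⊗[B] TT k B C n) : TT k B C (n+1)) ⊗ₜ[B] c))
      + (DL k B C n).rTensor C (hmt k B C n
          (((c₀ ⊗ₜ[B] x : C ⊗[B] TT k B C n) : TT k B C (n+1)) ⊗ₜ[B] c))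
      = ((c₀ ⊗ₜ[B] x : C ⊗[B] TT k B C n) : TT k B C (n+1)) ⊗ₜ[B] c := by
  have h1 : (DL k B C (n+1)).rTensor C
        (((c₀ ⊗ₜ[B] x : C ⊗[B] TT k B C n) : TT k B C (n+1)) ⊗ₜ[B] c)
      = (DL k B C (n+1) ((c₀ ⊗ₜ[B] x : C ⊗[B] TT k B C n) : TT k B C (n+1))) ⊗ₜ[B] c := rfl
  rw [h1, DL_apply, TensorProduct.sum_tmul]
  have h2 : ∀ j ∈ Finset.range (n+3),
      (((-1:ℤ)^j • ad k B C (n+1) j ((c₀ ⊗ₜ[B] x : C ⊗[B] TT k B C n) : TT k B C (n+1)))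
          ⊗ₜ[B] c : TT k B C (n+2) ⊗[B] C)
        = (-1:ℤ)^j • ((ad k B C (n+1) j ((c₀ ⊗ₜ[B] x : C ⊗[B] TT k B C n) : TT k B C (n+1)))
            ⊗ₜ[B] c) := by
    intro j _
    rw [TensorProduct.smul_tmul']
  rw [Finset.sum_congr rfl h2, map_sum]
  rw [Finset.sum_range_succ']
  have h3 : ∀ j, hmt k B C (n+1)
        ((-1:ℤ)^(j+1) • ((ad k B C (n+1) (j+1) ((c₀ ⊗ₜ[B] x : C ⊗[B] TT k B C n) : TT k B C (n+1)))
          ⊗ₜ[B] c))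
      = -((-1:ℤ)^j • ((ad k B C n j x ⊗ₜ[B] (c₀ * c) : TT k B C (n+1) ⊗[B] C))) := by
    intro j
    rw [map_zsmul]
    have : hmt k B C (n+1)
        ((ad k B C (n+1) (j+1) ((c₀ ⊗ₜ[B] x : C ⊗[B] TT k B C n) : TT k B C (n+1))) ⊗ₜ[B] c)
        = (ad k B C n j x ⊗ₜ[B] (c₀ * c) : TT k B C (n+1) ⊗[B] C) := rfl
    rw [this, pow_succ, mul_comm, neg_one_mul, neg_smul]
  have h4 : hmt k B C (n+1)
        ((-1:ℤ)^(0:ℕ) • ((ad k B C (n+1) 0 ((c₀ ⊗ₜ[B] x : C ⊗[B] TT k B C n) : TT k B C (n+1)))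
          ⊗ₜ[B] c))
      = ((c₀ ⊗ₜ[B] x : C ⊗[B] TT k B C n) : TT k B C (n+1)) ⊗ₜ[B] (1 * c) := by
    rw [pow_zero, one_smul]
    rfl
  rw [Finset.sum_congr rfl (fun j _ => h3 j), h4, one_mul]
  have h5 : (DL k B C n).rTensor C (hmt k B C n
        (((c₀ ⊗ₜ[B] x : C ⊗[B] TT k B C n) : TT k B C (n+1)) ⊗ₜ[B] c))
      = (DL k B C n x) ⊗ₜ[B] (c₀ * c) := rfl
  rw [h5, DL_apply, TensorProduct.sum_tmul]
  have h6 : ∀ j ∈ Finset.range (n+2),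
      (((-1:ℤ)^j • ad k B C n j x) ⊗ₜ[B] (c₀ * c) : TT k B C (n+1) ⊗[B] C)
        = (-1:ℤ)^j • ((ad k B C n j x ⊗ₜ[B] (c₀ * c) : TT k B C (n+1) ⊗[B] C)) := by
    intro j _
    rw [TensorProduct.smul_tmul']
  rw [Finset.sum_congr rfl h6, Finset.sum_neg_distrib, add_right_comm, neg_add_cancel, zero_add]

lemma homotopyS_z (n : ℕ) (z : C ⊗[B] TT k B C n) (c : C) :
    hmt k B C (n+1) ((DL k B C (n+1)).rTensor C ((z : TT k B C (n+1)) ⊗ₜ[B] c))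
      + (DL k B C n).rTensor C (hmt k B C n ((z : TT k B C (n+1)) ⊗ₜ[B] c))
      = (z : TT k B C (n+1)) ⊗ₜ[B] c := by
  induction z with
  | zero =>
      have e : ((0 : C ⊗[B] TT k B C n) : TT k B C (n+1)) ⊗ₜ[B] c
          = (0 : TT k B C (n+1) ⊗[B] C) := TensorProduct.zero_tmul _ c
      rw [e]
      simp only [map_zero, add_zero]
  | tmul c₀ x => exact homotopyS_pure k B C n c₀ x c
  | add a b ha hb =>
      have e : ((a + b : C ⊗[B] TT k B C n) : TT k B C (n+1)) ⊗ₜ[B] c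
          = ((a : TT k B C (n+1)) ⊗ₜ[B] c) + ((b : TT k B C (n+1)) ⊗ₜ[B] c) :=
        TensorProduct.add_tmul a b c
      rw [e]
      simp only [map_add]
      rw [add_add_add_comm, ha, hb]

lemma homotopyS (n : ℕ) (y : TT k B C (n+1) ⊗[B] C) :
    hmt k B C (n+1) ((DL k B C (n+1)).rTensor C y)
      + (DL k B C n).rTensor C (hmt k B C n y) = y := by
  induction y with
  | zero => simp only [map_zero, add_zero]
  | add a b ha hb =>
      simp only [map_add]
      rw [add_add_add_comm, ha, hb]
  | tmul z c => exact homotopyS_z k B C n z c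

lemma rbot_def : rbot k B C = (botL B C).rTensor C := rfl

lemma DL_rTensor_bot_eq_zero (w : B ⊗[B] C) :
    (DL k B C 0).rTensor C ((botL B C).rTensor C w) = 0 := by
  have hz : (DL k B C 0) ∘ₗ (botL B C) = 0 := by
    apply LinearMap.ext
    intro b
    simpa [botL] using DL_bottom k B C b
  calc (DL k B C 0).rTensor C ((botL B C).rTensor C w)
      = ((DL k B C 0) ∘ₗ (botL B C)).rTensor C w := by rw [LinearMap.rTensor_comp]; rfl
    _ = 0 := by rw [hz, LinearMap.rTensor_zero]; rfl

lemma DL_rTensor_DL_eq_zero (n : ℕ) (w : TT k B C n ⊗[B] C) :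
    (DL k B C (n+1)).rTensor C ((DL k B C n).rTensor C w) = 0 := by
  have hz : (DL k B C (n+1)) ∘ₗ (DL k B C n) = 0 := by
    apply LinearMap.ext
    intro x
    simpa using DL_comp_DL k B C n x
  calc (DL k B C (n+1)).rTensor C ((DL k B C n).rTensor C w)
      = ((DL k B C (n+1)) ∘ₗ (DL k B C n)).rTensor C w := by rw [LinearMap.rTensor_comp]; rfl
    _ = 0 := by rw [hz, LinearMap.rTensor_zero]; rfl

lemma homotopy_bot' (y : B ⊗[B] C) (hy : (botL B C).rTensor C y = 0) : y = 0 := by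
  have h := hmt0_bottom B C y
  rw [hy, map_zero] at h
  exact h.symm

lemma homotopy0' (y : TT k B C 0 ⊗[B] C) (hy : (DL k B C 0).rTensor C y = 0) :
    (botL B C).rTensor C (hmt0 B C y) = y := by
  have h := homotopy0 k B C y
  rw [hy, map_zero, zero_add, rbot_def] at h
  exact h

lemma homotopyS' (n : ℕ) (y : TT k B C (n+1) ⊗[B] C)
    (hy : (DL k B C (n+1)).rTensor C y = 0) :
    (DL k B C n).rTensor C (hmt k B C n y) = y := by
  have h := homotopyS k B C n y
  rw [hy, map_zero, zero_add] at h
  exact h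

lemma injective_bot (hff : Module.FaithfullyFlat B C) :
    Function.Injective (algebraMap B C) := by
  haveI := hff
  have hex : Function.Exact (0 : PUnit.{u+1} →ₗ[B] B) (botL B C) := by
    apply Module.FaithfullyFlat.rTensor_reflects_exact B C
    intro y
    constructor
    · intro hy
      have h : y = 0 := homotopy_bot' B C y hy
      exact ⟨0, by simp [← h]⟩
    · rintro ⟨w, rfl⟩
      have : ∀ v : PUnit.{u+1} ⊗[B] C,
          (botL B C).rTensor C ((0 : PUnit.{u+1} →ₗ[B] B).rTensor C v) = 0 := by
        intro v
        rw [LinearMap.rTensor_zero]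
        simp
      exact this w
  intro a b hab
  have h : botL B C (a - b) = 0 := by
    simp only [botL, Algebra.linearMap_apply, map_sub, hab, sub_self]
  obtain ⟨w, hw⟩ := (hex (a - b)).mp h
  have hz : (0 : PUnit.{u+1} →ₗ[B] B) w = 0 := rfl
  rw [hz] at hw
  exact sub_eq_zero.mp hw.symm

lemma exact_bot_DL (hff : Module.FaithfullyFlat B C) :
    Function.Exact (botL B C) (DL k B C 0) := by
  haveI := hff
  apply Module.FaithfullyFlat.rTensor_reflects_exact B C
  intro y
  constructor
  · intro hy
    exact ⟨hmt0 B C y, homotopy0' k B C y hy⟩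
  · rintro ⟨w, rfl⟩
    exact DL_rTensor_bot_eq_zero k B C w

lemma exact_DL_DL (hff : Module.FaithfullyFlat B C) (n : ℕ) :
    Function.Exact (DL k B C n) (DL k B C (n+1)) := by
  haveI := hff
  apply Module.FaithfullyFlat.rTensor_reflects_exact B C
  intro y
  constructor
  · intro hy
    exact ⟨hmt k B C n y, homotopyS' k B C n y hy⟩
  · rintro ⟨w, rfl⟩
    exact DL_rTensor_DL_eq_zero k B C n w
end


section FunctorLevel
variable (k B C : Type u) [Field k] [CommRing B] [Algebra k B] [CommRing C] [Algebra k C]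
  [Algebra B C] [IsScalarTower k B C]

/-- The bottom map `B → C` as a `k`-algebra hom into `TT 0`. -/
noncomputable def botA : B →ₐ[k] TT k B C 0 := IsScalarTower.toAlgHom k B C

/-- The coface maps as `k`-algebra homs. -/
noncomputable def adk (n i : ℕ) : TT k B C n →ₐ[k] TT k B C (n+1) :=
  (ad k B C n i).restrictScalars k

/-- The functor-level Amitsur differential. -/
noncomputable def DF (F : AbFunctor k) (n : ℕ) : F.obj (TT k B C n) →+ F.obj (TT k B C (n+1)) :=
  ∑ i ∈ Finset.range (n+2), ((-1:ℤ)^i) • F.map (adk k B C n i)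

lemma DF_apply (F : AbFunctor k) (n : ℕ) (x : F.obj (TT k B C n)) :
    DF k B C F n x = ∑ i ∈ Finset.range (n+2), ((-1:ℤ)^i) • F.map (adk k B C n i) x := by
  simp [DF, AddMonoidHom.finset_sum_apply]

lemma adk_comp (n i j : ℕ) (hij : i ≤ j) (hj : j ≤ n + 1) (x : TT k B C n) :
    adk k B C (n+1) (j+1) (adk k B C n i x) = adk k B C (n+1) i (adk k B C n j x) :=
  DFunLike.congr_fun (ad_comp k B C n i j hij hj) x

lemma DF_DF (F : AbFunctor k) (n : ℕ) (x : F.obj (TT k B C n)) :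
    DF k B C F (n+1) (DF k B C F n x) = 0 := by
  rw [DF_apply k B C F n x, map_sum]
  have : ∀ i ∈ Finset.range (n+2),
      DF k B C F (n+1) (((-1:ℤ)^i) • F.map (adk k B C n i) x)
        = ∑ j ∈ Finset.range (n+3),
            ((-1:ℤ)^(i+j)) • F.map (adk k B C (n+1) j) (F.map (adk k B C n i) x) := by
    intro i _
    rw [map_zsmul, DF_apply, Finset.smul_sum]
    refine Finset.sum_congr rfl fun j _ => ?_
    rw [smul_smul, ← pow_add]
  rw [Finset.sum_congr rfl this, Finset.sum_comm]
  refine alt_sum_cancel n (fun j i => F.map (adk k B C (n+1) j) (F.map (adk k B C n i) x))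
    (fun i j hij hj => ?_)
  show F.map (adk k B C (n+1) (j+1)) (F.map (adk k B C n i) x)
      = F.map (adk k B C (n+1) i) (F.map (adk k B C n j) x)
  rw [← AddMonoidHom.comp_apply, ← F.map_comp, ← AddMonoidHom.comp_apply, ← F.map_comp]
  have e : (adk k B C (n+1) (j+1)).comp (adk k B C n i)
      = (adk k B C (n+1) i).comp (adk k B C n j) :=
    AlgHom.ext fun y => adk_comp k B C n i j hij hj y
  rw [e]

lemma adk_comp_bot (i : ℕ) (hi : i ≤ 1) :
    (adk k B C 0 i).comp (botA k B C) = (adk k B C 0 0).comp (botA k B C) := by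
  refine AlgHom.ext fun b => ?_
  show adk k B C 0 i (algebraMap B (TT k B C 0) b) = adk k B C 0 0 (algebraMap B (TT k B C 0) b)
  interval_cases i
  · rfl
  · exact ((ad k B C 0 1).commutes b).trans ((ad k B C 0 0).commutes b).symm

lemma DF_bot (F : AbFunctor k) (b : F.obj B) :
    DF k B C F 0 (F.map (botA k B C) b) = 0 := by
  rw [DF_apply]
  have e : ∀ i, F.map (adk k B C 0 i) (F.map (botA k B C) b)
      = F.map ((adk k B C 0 i).comp (botA k B C)) b := by
    intro i
    rw [F.map_comp]
    rfl
  simp only [Finset.sum_range_succ, Finset.sum_range_zero, zero_add, pow_zero, pow_one,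
    one_smul, neg_smul]
  rw [e 0, e 1, adk_comp_bot k B C 1 (le_refl 1), add_neg_cancel]

lemma DF_natural {F G : AbFunctor k} (φ : AbHom k F G) (n : ℕ) (x : F.obj (TT k B C n)) :
    φ.app (TT k B C (n+1)) (DF k B C F n x) = DF k B C G n (φ.app (TT k B C n) x) := by
  rw [DF_apply, map_sum, DF_apply]
  refine Finset.sum_congr rfl fun i _ => ?_
  rw [map_zsmul, φ.naturality (adk k B C n i) x]

/-- Degree-0 exactness: injectivity of `F(B) → F(C)`. -/
def Ex0 (F : AbFunctor k) : Prop := Function.Injective (F.map (botA k B C))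

/-- Degree-1 exactness. -/
def Ex1 (F : AbFunctor k) : Prop := ∀ x : F.obj (TT k B C 0),
  DF k B C F 0 x = 0 → ∃ b, x = F.map (botA k B C) b

/-- Higher-degree exactness. -/
def ExS (F : AbFunctor k) (n : ℕ) : Prop := ∀ x : F.obj (TT k B C (n+1)),
  DF k B C F (n+1) x = 0 → ∃ y, x = DF k B C F n y

/-- Exactness of the Amitsur complex of `F` at degree `n`. -/
def ExA (F : AbFunctor k) : ℕ → Prop
  | 0 => Ex0 k B C F
  | 1 => Ex1 k B C F
  | (n+2) => ExS k B C F n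

end FunctorLevel

lemma inj_of_ker (k : Type u) {M N : Type u} [AddCommGroup M] [AddCommGroup N] (f : M →+ N)
    (h : ∀ x, f x = 0 → x = 0) : Function.Injective f := fun a b hab =>
  sub_eq_zero.mp (h _ (by rw [map_sub, hab, sub_self]))

section GaLevel
variable (k B C : Type u) [Field k] [CommRing B] [Algebra k B] [CommRing C] [Algebra k C]
  [Algebra B C] [IsScalarTower k B C]

/-- Evaluation at a coordinate as an additive hom out of `(Ga k ι).obj D`. -/
noncomputable def gaEv (ι D : Type u) [CommRing D] [Algebra k D] (c : ι) :
    (Ga k ι).obj D →+ D where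
  toFun y := Finsupp.toFun (α := ι) (M := D) y c
  map_zero' := rfl
  map_add' _ _ := rfl

lemma Ga_DF_apply (ι : Type u) (n : ℕ) (x : (Ga k ι).obj (TT k B C n)) (c : ι) :
    gaEv k ι (TT k B C (n+1)) c (DF k B C (Ga k ι) n x) =
      DL k B C n (gaEv k ι (TT k B C n) c x) := by
  rw [DF_apply, map_sum, DL_apply]
  refine Finset.sum_congr rfl fun i _ => ?_
  rw [map_zsmul]
  rfl

lemma ga_Ex0 (hff : Module.FaithfullyFlat B C) (ι : Type u) : Ex0 k B C (Ga k ι) := by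
  refine inj_of_ker k _ fun x hx => ?_
  have hc : ∀ c, gaEv k ι B c x = 0 := by
    intro c
    apply injective_bot B C hff
    have h1 : gaEv k ι (TT k B C 0) c ((Ga k ι).map (botA k B C) x) = 0 := by
      rw [hx]; exact map_zero _
    exact h1.trans (map_zero (algebraMap B C)).symm
  exact Finsupp.ext fun c => hc c

lemma ga_Ex1 (hff : Module.FaithfullyFlat B C) (ι : Type u) : Ex1 k B C (Ga k ι) := by
  classical
  intro x hx
  have hcoord : ∀ c : ι, gaEv k ι (TT k B C 0) c x ∈ Set.range (botL B C) := by
    intro c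
    have h1 : gaEv k ι (TT k B C 1) c (DF k B C (Ga k ι) 0 x) = 0 := by
      rw [hx]; exact map_zero _
    rw [Ga_DF_apply] at h1
    exact (exact_bot_DL k B C hff _).mp h1
  refine ⟨Finsupp.onFinset (x : ι →₀ TT k B C 0).support
    (fun c => if hc : gaEv k ι (TT k B C 0) c x = 0 then 0 else (hcoord c).choose) ?_, ?_⟩
  · intro c hc
    erw [Finsupp.mem_support_iff]
    intro h0
    exact hc (dif_pos (show gaEv k ι (TT k B C 0) c x = 0 from h0))
  · refine Finsupp.ext fun c => ?_
    show gaEv k ι (TT k B C 0) c x = algebraMap B C _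
    rw [Finsupp.onFinset_apply]
    by_cases h0 : gaEv k ι (TT k B C 0) c x = 0
    · simp only [dif_pos h0, map_zero]
      exact h0
    · simp only [dif_neg h0]
      exact ((hcoord c).choose_spec).symm

lemma ga_ExS (hff : Module.FaithfullyFlat B C) (ι : Type u) (n : ℕ) :
    ExS k B C (Ga k ι) n := by
  classical
  intro x hx
  have hcoord : ∀ c : ι, gaEv k ι (TT k B C (n+1)) c x ∈ Set.range (DL k B C n) := by
    intro c
    have h1 : gaEv k ι (TT k B C (n+2)) c (DF k B C (Ga k ι) (n+1) x) = 0 := by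
      rw [hx]; exact map_zero _
    rw [Ga_DF_apply] at h1
    exact (exact_DL_DL k B C hff n _).mp h1
  refine ⟨Finsupp.onFinset (x : ι →₀ TT k B C (n+1)).support
    (fun c => if hc : gaEv k ι (TT k B C (n+1)) c x = 0 then 0 else (hcoord c).choose) ?_, ?_⟩
  · intro c hc
    erw [Finsupp.mem_support_iff]
    intro h0
    exact hc (dif_pos (show gaEv k ι (TT k B C (n+1)) c x = 0 from h0))
  · refine Finsupp.ext fun c => ?_
    have h2 := Ga_DF_apply k B C ι n (Finsupp.onFinset (x : ι →₀ TT k B C (n+1)).support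
      (fun c => if hc : gaEv k ι (TT k B C (n+1)) c x = 0 then 0 else (hcoord c).choose)
      (fun c hc => by
        erw [Finsupp.mem_support_iff]
        intro h0
        exact hc (dif_pos (show gaEv k ι (TT k B C (n+1)) c x = 0 from h0)))) c
    show gaEv k ι (TT k B C (n+1)) c x = _
    refine Eq.trans ?_ h2.symm
    have h3 : gaEv k ι (TT k B C n) c (Finsupp.onFinset (x : ι →₀ TT k B C (n+1)).support
      (fun c => if hc : gaEv k ι (TT k B C (n+1)) c x = 0 then 0 else (hcoord c).choose)
      (fun c hc => by
        erw [Finsupp.mem_support_iff]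
        intro h0
        exact hc (dif_pos (show gaEv k ι (TT k B C (n+1)) c x = 0 from h0))))
        = if hc : gaEv k ι (TT k B C (n+1)) c x = 0 then 0 else (hcoord c).choose := rfl
    rw [h3]
    by_cases h0 : gaEv k ι (TT k B C (n+1)) c x = 0
    · simp only [dif_pos h0, map_zero]
      exact h0
    · simp only [dif_neg h0]
      exact ((hcoord c).choose_spec).symm

lemma ga_ExA (hff : Module.FaithfullyFlat B C) (ι : Type u) (n : ℕ) :
    ExA k B C (Ga k ι) n := by
  match n with
  | 0 => exact ga_Ex0 k B C hff ι
  | 1 => exact ga_Ex1 k B C hff ι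
  | (m+2) => exact ga_ExS k B C hff ι m

end GaLevel

section Chases
variable (k B C : Type u) [Field k] [CommRing B] [Algebra k B] [CommRing C] [Algebra k C]
  [Algebra B C] [IsScalarTower k B C]

variable {F' F F'' : AbFunctor k} (i : AbHom k F' F) (p : AbHom k F F'')

lemma chase_mid (hse : IsShortExact k i p) (n : ℕ)
    (h' : ExA k B C F' n) (h'' : ExA k B C F'' n) : ExA k B C F n := by
  match n with
  | 0 =>
      refine inj_of_ker k _ fun x hx => ?_
      have h1 : F''.map (botA k B C) (p.app B x) = 0 := by
        rw [p.naturality (botA k B C) x, hx, map_zero]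
      have h2 : p.app B x = 0 := h'' (by rw [h1, map_zero] : _ = F''.map (botA k B C) 0)
      obtain ⟨x', hx'⟩ := (hse.exact B x).mp h2
      have h3 : i.app (TT k B C 0) (F'.map (botA k B C) x') = 0 := by
        rw [← i.naturality (botA k B C) x', hx', hx]
      have h4 : F'.map (botA k B C) x' = 0 :=
        hse.inj (TT k B C 0) (by rw [h3, map_zero])
      have h5 : x' = 0 := h' (by rw [h4, map_zero] : _ = F'.map (botA k B C) 0)
      rw [← hx', h5, map_zero]
  | 1 =>
      intro x hx
      have h1 : DF k B C F'' 0 (p.app _ x) = 0 := by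
        rw [← DF_natural k B C p 0 x, hx, map_zero]
      obtain ⟨b'', hb''⟩ := h'' _ h1
      obtain ⟨b, hb⟩ := hse.surj B b''
      have h2 : p.app (TT k B C 0) (x - F.map (botA k B C) b) = 0 := by
        rw [map_sub, ← p.naturality (botA k B C) b, hb, ← hb'', sub_self]
      obtain ⟨z, hz⟩ := (hse.exact _ _).mp h2
      have h3 : i.app _ (DF k B C F' 0 z) = 0 := by
        rw [DF_natural k B C i 0 z, hz, map_sub, hx, DF_bot, sub_self]
      have h4 : DF k B C F' 0 z = 0 := hse.inj _ (by rw [h3, map_zero])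
      obtain ⟨b', hb'⟩ := h' z h4
      refine ⟨b + i.app B b', ?_⟩
      rw [map_add, i.naturality (botA k B C) b', ← hb', hz]
      abel
  | (m+2) =>
      intro x hx
      have h1 : DF k B C F'' (m+1) (p.app _ x) = 0 := by
        rw [← DF_natural k B C p (m+1) x, hx, map_zero]
      obtain ⟨y'', hy''⟩ := h'' _ h1
      obtain ⟨y, hy⟩ := hse.surj (TT k B C m) y''
      have h2 : p.app (TT k B C (m+1)) (x - DF k B C F m y) = 0 := by
        rw [map_sub, DF_natural k B C p m y, hy, ← hy'', sub_self]
      obtain ⟨z, hz⟩ := (hse.exact _ _).mp h2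
      have h3 : i.app _ (DF k B C F' (m+1) z) = 0 := by
        rw [DF_natural k B C i (m+1) z, hz, map_sub, hx, DF_DF, sub_self]
      have h4 : DF k B C F' (m+1) z = 0 := hse.inj _ (by rw [h3, map_zero])
      obtain ⟨w, hw⟩ := h' z h4
      refine ⟨y + i.app _ w, ?_⟩
      rw [map_add, ← DF_natural k B C i m w, ← hw, hz]
      abel

lemma chase_quot (hse : IsShortExact k i p) (n : ℕ)
    (h' : ExA k B C F' (n+1)) (h : ExA k B C F n) : ExA k B C F'' n := by
  match n with
  | 0 =>
      refine inj_of_ker k _ fun x'' hx'' => ?_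
      obtain ⟨x, rfl⟩ := hse.surj B x''
      have h1 : p.app (TT k B C 0) (F.map (botA k B C) x) = 0 := by
        rw [← p.naturality (botA k B C) x, hx'']
      obtain ⟨w, hw⟩ := (hse.exact _ _).mp h1
      have h2 : i.app _ (DF k B C F' 0 w) = 0 := by
        rw [DF_natural k B C i 0 w, hw, DF_bot]
      have h3 : DF k B C F' 0 w = 0 := hse.inj _ (by rw [h2, map_zero])
      obtain ⟨v, hv⟩ := h' w h3
      have h4 : F.map (botA k B C) (x - i.app B v) = 0 := by
        rw [map_sub, i.naturality (botA k B C) v, ← hv, hw, sub_self]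
      have h5 : x - i.app B v = 0 := h (by rw [h4, map_zero] : _ = F.map (botA k B C) 0)
      have h6 : x = i.app B v := by rwa [sub_eq_zero] at h5
      rw [h6]
      exact (hse.exact B (i.app B v)).mpr ⟨v, rfl⟩
  | 1 =>
      intro x'' hx''
      obtain ⟨x, rfl⟩ := hse.surj (TT k B C 0) x''
      have h1 : p.app (TT k B C 1) (DF k B C F 0 x) = 0 := by
        erw [DF_natural k B C p 0 x, hx'']
      obtain ⟨w, hw⟩ := (hse.exact _ _).mp h1
      have h2 : i.app _ (DF k B C F' 1 w) = 0 := by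
        rw [DF_natural k B C i 1 w, hw]
        exact DF_DF k B C F 0 x
      have h3 : DF k B C F' 1 w = 0 := hse.inj _ (by rw [h2, map_zero])
      obtain ⟨v, hv⟩ := h' w h3
      have h4 : DF k B C F 0 (x - i.app _ v) = 0 := by
        erw [map_sub, ← DF_natural k B C i 0 v, ← hv, hw, sub_self]
      obtain ⟨b, hb⟩ := h _ h4
      refine ⟨p.app B b, ?_⟩
      rw [p.naturality (botA k B C) b]
      have h5 : x = i.app _ v + F.map (botA k B C) b := by
        rw [← hb]; abel
      rw [h5, map_add]
      have h6 : p.app (TT k B C 0) (i.app (TT k B C 0) v) = 0 :=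
        (hse.exact _ _).mpr ⟨v, rfl⟩
      erw [h6, zero_add]
  | (m+2) =>
      intro x'' hx''
      obtain ⟨x, rfl⟩ := hse.surj (TT k B C (m+1)) x''
      have h1 : p.app (TT k B C (m+2)) (DF k B C F (m+1) x) = 0 := by
        rw [DF_natural k B C p (m+1) x, hx'']
      obtain ⟨w, hw⟩ := (hse.exact _ _).mp h1
      have h2 : i.app _ (DF k B C F' (m+2) w) = 0 := by
        rw [DF_natural k B C i (m+2) w, hw]
        exact DF_DF k B C F (m+1) x
      have h3 : DF k B C F' (m+2) w = 0 := hse.inj _ (by rw [h2, map_zero])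
      obtain ⟨v, hv⟩ := h' w h3
      have h4 : DF k B C F (m+1) (x - i.app _ v) = 0 := by
        rw [map_sub, ← DF_natural k B C i (m+1) v, ← hv, hw, sub_self]
      obtain ⟨y, hy⟩ := h _ h4
      refine ⟨p.app _ y, ?_⟩
      rw [← DF_natural k B C p m y]
      have h5 : x = i.app _ v + DF k B C F m y := by
        rw [← hy]; abel
      rw [h5, map_add]
      have h6 : p.app _ (i.app (TT k B C (m+1)) v) = 0 :=
        (hse.exact _ _).mpr ⟨v, rfl⟩
      rw [h6, zero_add]

lemma chase_iso {G : AbFunctor k} (e : AbIso k F G) (n : ℕ)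
    (hG : ExA k B C G n) : ExA k B C F n := by
  have inv_nat : ∀ {D E : Type u} [CommRing D] [Algebra k D] [CommRing E] [Algebra k E]
      (f : D →ₐ[k] E) (x : G.obj D), F.map f (e.inv.app D x) = e.inv.app E (G.map f x) :=
    fun f x => e.inv.naturality f x
  match n with
  | 0 =>
      refine inj_of_ker k _ fun x hx => ?_
      have h1 : G.map (botA k B C) (e.hom.app B x) = 0 := by
        rw [e.hom.naturality (botA k B C) x, hx, map_zero]
      have h2 : e.hom.app B x = 0 := hG (by rw [h1, map_zero] : _ = G.map (botA k B C) 0)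
      have := e.hom_inv B x
      rw [h2, map_zero] at this
      exact this.symm
  | 1 =>
      intro x hx
      have h1 : DF k B C G 0 (e.hom.app _ x) = 0 := by
        rw [← DF_natural k B C e.hom 0 x, hx, map_zero]
      obtain ⟨b, hb⟩ := hG _ h1
      refine ⟨e.inv.app B b, ?_⟩
      rw [inv_nat (botA k B C) b, ← hb, e.hom_inv]
  | (m+2) =>
      intro x hx
      have h1 : DF k B C G (m+1) (e.hom.app _ x) = 0 := by
        rw [← DF_natural k B C e.hom (m+1) x, hx, map_zero]
      obtain ⟨y, hy⟩ := hG _ h1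
      refine ⟨e.inv.app _ y, ?_⟩
      rw [← DF_natural k B C e.inv m y, ← hy, e.hom_inv]

end Chases

section Global
variable {k : Type u} [Field k]

/-- Exactness of the Amitsur complex of `F` in every degree, for every faithfully
flat `B → C`. -/
def AllDeg (F : AbFunctor k) : Prop :=
  ∀ (B C : Type u) [CommRing B] [Algebra k B] [CommRing C] [Algebra k C]
    [Algebra B C] [IsScalarTower k B C],
    Module.FaithfullyFlat B C → ∀ n : ℕ, ExA k B C F n

lemma allDeg_Ga (ι : Type u) : AllDeg (Ga k ι) := by
  intro B C _ _ _ _ _ _ hff n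
  exact ga_ExA k B C hff ι n

lemma allDeg_iso {F G : AbFunctor k} (e : AbIso k F G) (hG : AllDeg G) : AllDeg F := by
  intro B C _ _ _ _ _ _ hff n
  exact chase_iso k B C e n (hG B C hff n)

lemma allDeg_strict {F : AbFunctor k} (h : IsStrictlyAdditive k F) : AllDeg F := by
  cases h with
  | inl h => exact allDeg_iso h.choose_spec.some (allDeg_Ga _)
  | inr h => exact allDeg_iso h.some (allDeg_Ga _)

lemma allDeg_additive {F : AbFunctor k} (h : IsAdditive k F) : AllDeg F := by
  induction h with
  | of_strict F hF => exact allDeg_strict hF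
  | of_ext i p hse _ hF'' ih =>
      intro B C _ _ _ _ _ _ hff n
      exact chase_mid k B C i p hse n (ih B C hff n) (allDeg_strict hF'' B C hff n)

lemma allDeg_pseudo {P : AbFunctor k} (h : IsPseudoadditive k P) : AllDeg P := by
  induction h with
  | of_additive P hP => exact allDeg_additive hP
  | of_ext i p hse _ hU ih =>
      intro B C _ _ _ _ _ _ hff n
      exact chase_quot k B C i p hse n (ih B C hff (n+1)) (allDeg_additive hU B C hff n)

end Global

/-- A pseudoadditive functor is a sheaf for the fpqc topology. -/
theorem pseudoadditive_isFpqcSheaf {k : Type u} [Field k] {P : AbFunctor k}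
    (hP : IsPseudoadditive k P) : IsFpqcSheaf k P := by
  intro B C _ _ _ _ _ _ hff
  have hAll := allDeg_pseudo hP
  have h0 : Ex0 k B C P := hAll B C hff 0
  have h1 : Ex1 k B C P := hAll B C hff 1
  constructor
  · exact h0
  · have key : ∀ (t : C →ₐ[k] C ⊗[B] C) (b : P.obj B),
        P.map t (P.map (IsScalarTower.toAlgHom k B C) b)
          = P.map (t.comp (IsScalarTower.toAlgHom k B C)) b := by
      intro t b
      rw [P.map_comp]
      rfl
    have e : (tensorIncl₁ k (B := B) (C := C)).comp (IsScalarTower.toAlgHom k B C)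
        = (tensorIncl₂ k (B := B) (C := C)).comp (IsScalarTower.toAlgHom k B C) := by
      refine AlgHom.ext fun b => ?_
      exact ((ad k B C 0 1).commutes b).trans ((ad k B C 0 0).commutes b).symm
    apply Set.eq_of_subset_of_subset
    · rintro x ⟨b, rfl⟩
      show P.map (tensorIncl₁ k (B := B) (C := C)) (P.map (IsScalarTower.toAlgHom k B C) b)
          = P.map (tensorIncl₂ k (B := B) (C := C)) (P.map (IsScalarTower.toAlgHom k B C) b)
      rw [key, key, e]
    · intro x hx
      have hx' : P.map (tensorIncl₁ k (B := B) (C := C)) x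
          = P.map (tensorIncl₂ k (B := B) (C := C)) x := hx
      have hD : DF k B C P 0 x = 0 := by
        rw [DF_apply]
        simp only [Finset.sum_range_succ, Finset.sum_range_zero, zero_add, pow_zero, pow_one,
          one_smul, neg_smul]
        have e0 : P.map (adk k B C 0 0) x = P.map (tensorIncl₂ k (B := B) (C := C)) x := rfl
        have e1 : P.map (adk k B C 0 1) x = P.map (tensorIncl₁ k (B := B) (C := C)) x := rfl
        rw [e0, e1, ← hx', add_neg_cancel]
      obtain ⟨b, hb⟩ := h1 x hD
      exact ⟨b, hb.symm⟩
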